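/- The generalized Pell equation x^2 - 343*y^2 = 2 has infinitely many solutions in positive integers (x, y). -/
import Mathlib

private def pellf : ℕ → ℕ × ℕ
  | 0 => (11427, 617)
  | n+1 => (130576328 * (pellf n).1 + 2418307437 * (pellf n).2,
            7050459 * (pellf n).1 + 130576328 * (pellf n).2)

private lemma pellf_spec (n : ℕ) : 0 < (pellf n).1 ∧ 0 < (pellf n).2 ∧
    ((pellf n).1 : ℤ) ^ 2 - 343 * ((pellf n).2 : ℤ) ^ 2 = 2 := by
  induction n with
  | zero => refine ⟨by norm_num [pellf], by norm_num [pellf], by norm_num [pellf]⟩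
  | succ n ih =>
    obtain ⟨h1, h2, h3⟩ := ih
    refine ⟨by simp only [pellf]; positivity, by simp only [pellf]; positivity, ?_⟩
    simp only [pellf]
    push_cast
    linear_combination h3

private lemma pellf_mono : StrictMono (fun n => (pellf n).1) := by
  apply strictMono_nat_of_lt_succ
  intro n
  have h1 := (pellf_spec n).1
  show (pellf n).1 < 130576328 * (pellf n).1 + 2418307437 * (pellf n).2
  nlinarith

theorem stmt_4 :
    {p : ℕ × ℕ | 0 < p.1 ∧ 0 < p.2 ∧
      (p.1 : ℤ) ^ 2 - 343 * (p.2 : ℤ) ^ 2 = 2}.Infinite := by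
  refine Set.infinite_of_injective_forall_mem (f := pellf) ?_ pellf_spec
  intro a b hab
  exact pellf_mono.injective (congrArg Prod.fst hab)
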